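/- Let G be a finite simple graph on the vertex set {1,…,n} with m edges, and let σ = pos_ℚ(A_G) ⊆ ℚ^{n+m}. Then σ has exactly 2m+n extreme rays: the extreme rays of σ are precisely the pairwise distinct rays {λa : λ ∈ ℚ, λ ≥ 0} for a ∈ A_G, and each such ray is a face of σ (i.e., for each a ∈ A_G there exists c ∈ ℚ^{n+m} with c·x ≥ 0 for all x ∈ σ and σ ∩ {x : c·x = 0} = {λa : λ ∈ ℚ, λ ≥ 0}). -/

import Mathlib

open MvPolynomial

/-- The index set of the vector configuration `A_G`: one vector for each vertex `i` (`a_{ii}`)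
and two (`a_{ij}`, `a_{ji}`) for each edge `{i,j}` of `G`; in total `2m + n` vectors. -/
abbrev VarSet (n : ℕ) (G : SimpleGraph (Fin n)) : Type :=
  {p : Fin n × Fin n // p.1 = p.2 ∨ G.Adj p.1 p.2}

/-- The index `t` of the edge `{i,j}` in the fixed enumeration `z` of the edges of `G`. -/
noncomputable def edgeIdx {n m : ℕ} {G : SimpleGraph (Fin n)} (z : Fin m ≃ G.edgeSet)
    {i j : Fin n} (h : G.Adj i j) : Fin m :=
  z.symm ⟨s(i, j), G.mem_edgeSet.mpr h⟩

/-- The vector configuration `A_G`, viewed in `ℚ^{n+m}`: `a_{jj} = e_j`; for the edge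
`z_t = {i,j}` with `i < j`, `a_{ij} = e_i + e_j - e_{n+t}` and `a_{ji} = e_{n+t}`. -/
noncomputable def aQ (n m : ℕ) (G : SimpleGraph (Fin n)) (z : Fin m ≃ G.edgeSet)
    (v : VarSet n G) : (Fin n ⊕ Fin m) → ℚ :=
  if hij : v.1.1 = v.1.2 then Pi.single (Sum.inl v.1.1) 1
  else
    have hadj : G.Adj v.1.1 v.1.2 := v.2.resolve_left hij
    if v.1.1 < v.1.2 then
      Pi.single (Sum.inl v.1.1) 1 + Pi.single (Sum.inl v.1.2) 1
        - Pi.single (Sum.inr (edgeIdx z hadj)) 1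
    else Pi.single (Sum.inr (edgeIdx z hadj)) 1

/-- The cone `σ = pos_ℚ(A_G)` of all non-negative rational combinations of the vectors of
`A_G`. -/
noncomputable def posCone (n m : ℕ) (G : SimpleGraph (Fin n)) [DecidableRel G.Adj]
    (z : Fin m ≃ G.edgeSet) : Set ((Fin n ⊕ Fin m) → ℚ) :=
  {x | ∃ c : VarSet n G → ℚ, (∀ v, 0 ≤ c v) ∧ x = ∑ v, c v • aQ n m G z v}

/-- The standard inner product on `ℚ^{n+m}`. -/
def dotQ {n m : ℕ} (c x : (Fin n ⊕ Fin m) → ℚ) : ℚ := ∑ s, c s * x s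

/-- `F` is a face of the cone `σ`: `F = σ ∩ {x : c·x = 0}` for some `c` with `c·x ≥ 0` on `σ`. -/
def IsFace {n m : ℕ} (σ F : Set ((Fin n ⊕ Fin m) → ℚ)) : Prop :=
  ∃ c : (Fin n ⊕ Fin m) → ℚ, (∀ x ∈ σ, 0 ≤ dotQ c x) ∧ F = σ ∩ {x | dotQ c x = 0}

/-- The ray `{λ a : λ ∈ ℚ, λ ≥ 0}` spanned by `a`. -/
def ray {n m : ℕ} (a : (Fin n ⊕ Fin m) → ℚ) : Set ((Fin n ⊕ Fin m) → ℚ) :=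
  {x | ∃ l : ℚ, 0 ≤ l ∧ x = l • a}

/-- `F` is an extreme ray of `σ`: a face of `σ` of the form `{λ a : λ ≥ 0}`, `a ≠ 0`. -/
def IsExtremeRay {n m : ℕ} (σ F : Set ((Fin n ⊕ Fin m) → ℚ)) : Prop :=
  IsFace σ F ∧ ∃ a : (Fin n ⊕ Fin m) → ℚ, a ≠ 0 ∧ F = ray a

set_option linter.unusedSectionVars false

section Aux

variable {n m : ℕ} {G : SimpleGraph (Fin n)} (z : Fin m ≃ G.edgeSet)

lemma dotQ_single (c : (Fin n ⊕ Fin m) → ℚ) (s : Fin n ⊕ Fin m) :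
    dotQ c (Pi.single s 1) = c s := by
  simp [dotQ, Pi.single_apply, mul_ite, Finset.sum_ite_eq']

lemma dotQ_smul (c x : (Fin n ⊕ Fin m) → ℚ) (l : ℚ) : dotQ c (l • x) = l * dotQ c x := by
  simp only [dotQ, Pi.smul_apply, smul_eq_mul, Finset.mul_sum, mul_left_comm]

lemma dotQ_sum {ι : Type*} (c : (Fin n ⊕ Fin m) → ℚ) (f : ι → (Fin n ⊕ Fin m) → ℚ)
    (t : Finset ι) : dotQ c (∑ i ∈ t, f i) = ∑ i ∈ t, dotQ c (f i) := by
  simp [dotQ, Finset.mul_sum, Finset.sum_comm]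

lemma dotQ_aQ_diag (c : (Fin n ⊕ Fin m) → ℚ) (v : VarSet n G) (h : v.1.1 = v.1.2) :
    dotQ c (aQ n m G z v) = c (Sum.inl v.1.1) := by
  rw [aQ, dif_pos h, dotQ_single]

lemma dotQ_aQ_lt (c : (Fin n ⊕ Fin m) → ℚ) (v : VarSet n G) (h : ¬ v.1.1 = v.1.2)
    (hlt : v.1.1 < v.1.2) :
    dotQ c (aQ n m G z v) = c (Sum.inl v.1.1) + c (Sum.inl v.1.2)
      - c (Sum.inr (edgeIdx z (v.2.resolve_left h))) := by
  rw [aQ, dif_neg h]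
  simp only [if_pos hlt]
  simp [dotQ, Pi.single_apply, mul_ite, mul_sub, mul_add, Finset.sum_sub_distrib,
    Finset.sum_add_distrib, Finset.sum_ite_eq']

lemma dotQ_aQ_gt (c : (Fin n ⊕ Fin m) → ℚ) (v : VarSet n G) (h : ¬ v.1.1 = v.1.2)
    (hlt : ¬ v.1.1 < v.1.2) :
    dotQ c (aQ n m G z v) = c (Sum.inr (edgeIdx z (v.2.resolve_left h))) := by
  rw [aQ, dif_neg h]
  simp only [if_neg hlt]
  rw [dotQ_single]

lemma edgeIdx_eq_iff {i j i' j' : Fin n} (h : G.Adj i j) (h' : G.Adj i' j') :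
    edgeIdx z h = edgeIdx z h' ↔ s(i, j) = s(i', j') := by
  rw [edgeIdx, edgeIdx, Equiv.apply_eq_iff_eq, Subtype.mk_eq_mk]

lemma dotQ_one_aQ (v : VarSet n G) : dotQ (fun _ => (1:ℚ)) (aQ n m G z v) = 1 := by
  by_cases h : v.1.1 = v.1.2
  · rw [dotQ_aQ_diag z _ v h]
  · by_cases hlt : v.1.1 < v.1.2
    · rw [dotQ_aQ_lt z _ v h hlt]; ring
    · rw [dotQ_aQ_gt z _ v h hlt]

lemma dotQ_zero (c : (Fin n ⊕ Fin m) → ℚ) : dotQ c 0 = 0 := by simp [dotQ]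

lemma aQ_ne_zero (v : VarSet n G) : aQ n m G z v ≠ 0 := by
  intro h
  have := dotQ_one_aQ z v
  rw [h, dotQ_zero] at this
  exact one_ne_zero (α := ℚ) this.symm

variable [DecidableRel G.Adj]

lemma smul_aQ_mem (v : VarSet n G) (l : ℚ) (hl : 0 ≤ l) :
    l • aQ n m G z v ∈ posCone n m G z := by
  classical
  refine ⟨Pi.single v l, ?_, ?_⟩
  · intro w
    rcases eq_or_ne w v with rfl | hw
    · simpa using hl
    · simp [Pi.single_apply, hw]
  · rw [Finset.sum_eq_single v]
    · simp
    · intro w _ hw; simp [Pi.single_apply, hw]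
    · intro hv; exact absurd (Finset.mem_univ v) hv

lemma aQ_mem (v : VarSet n G) : aQ n m G z v ∈ posCone n m G z := by
  simpa using smul_aQ_mem z v 1 zero_le_one

lemma dotQ_combo (c : (Fin n ⊕ Fin m) → ℚ) (d : VarSet n G → ℚ) :
    dotQ c (∑ v, d v • aQ n m G z v) = ∑ v, d v * dotQ c (aQ n m G z v) := by
  rw [dotQ_sum]
  exact Finset.sum_congr rfl fun v _ => dotQ_smul c _ (d v)

lemma exists_cvec (v : VarSet n G) :
    ∃ c : (Fin n ⊕ Fin m) → ℚ, ∀ w : VarSet n G,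
      0 ≤ dotQ c (aQ n m G z w) ∧ (dotQ c (aQ n m G z w) = 0 ↔ w = v) := by
  classical
  by_cases hv : v.1.1 = v.1.2
  · -- v = a_{kk}
    refine ⟨Sum.elim (fun j => if j = v.1.1 then 0 else 1) (fun _ => 1/2), fun w => ?_⟩
    by_cases hw : w.1.1 = w.1.2
    · rw [dotQ_aQ_diag z _ w hw]
      simp only [Sum.elim_inl]
      by_cases h : w.1.1 = v.1.1
      · have hwv : w = v := Subtype.ext (Prod.ext h ((hw.symm.trans h).trans hv))
        rw [if_pos h]
        exact ⟨le_refl 0, iff_of_true rfl hwv⟩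
      · have hwv : w ≠ v := fun he => h (by rw [he])
        rw [if_neg h]
        exact ⟨zero_le_one, iff_of_false one_ne_zero hwv⟩
    · have hwv : w ≠ v := fun he => hw (by rw [he]; exact hv)
      by_cases hwlt : w.1.1 < w.1.2
      · rw [dotQ_aQ_lt z _ w hw hwlt]
        simp only [Sum.elim_inl, Sum.elim_inr]
        constructor
        · split_ifs with h1 h2 h2 <;>
            first | exact absurd (h1.trans h2.symm) hw | norm_num
        · refine iff_of_false ?_ hwv
          split_ifs with h1 h2 h2 <;>
            first | exact absurd (h1.trans h2.symm) hw | norm_num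
      · rw [dotQ_aQ_gt z _ w hw hwlt]
        simp only [Sum.elim_inr]
        exact ⟨by norm_num, iff_of_false (by norm_num) hwv⟩
  · have hadjv : G.Adj v.1.1 v.1.2 := v.2.resolve_left hv
    by_cases hvlt : v.1.1 < v.1.2
    · -- v = a_{ij}, i < j
      refine ⟨Sum.elim (fun _ => 1)
        (fun t => if t = edgeIdx z (v.2.resolve_left hv) then 2 else 1), fun w => ?_⟩
      by_cases hw : w.1.1 = w.1.2
      · have hwv : w ≠ v := fun he => hv (by rw [← he]; exact hw)
        rw [dotQ_aQ_diag z _ w hw]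
        simp only [Sum.elim_inl]
        exact ⟨zero_le_one, iff_of_false one_ne_zero hwv⟩
      · by_cases hwlt : w.1.1 < w.1.2
        · rw [dotQ_aQ_lt z _ w hw hwlt]
          simp only [Sum.elim_inl, Sum.elim_inr]
          constructor
          · split_ifs <;> norm_num
          · by_cases ht : edgeIdx z (w.2.resolve_left hw) = edgeIdx z (v.2.resolve_left hv)
            · have hwv : w = v := by
                rw [edgeIdx_eq_iff] at ht
                rcases Sym2.eq_iff.mp ht with ⟨h1, h2⟩ | ⟨h1, h2⟩
                · exact Subtype.ext (Prod.ext h1 h2)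
                · exfalso; rw [h1, h2] at hwlt; exact absurd hwlt (lt_asymm hvlt)
              rw [if_pos ht]
              exact iff_of_true (by norm_num) hwv
            · rw [if_neg ht]
              refine iff_of_false (by norm_num) (fun he => ht ?_)
              subst he; rfl
        · rw [dotQ_aQ_gt z _ w hw hwlt]
          simp only [Sum.elim_inr]
          refine ⟨?_, iff_of_false ?_ (fun he => hwlt (by rw [he]; exact hvlt))⟩ <;>
            split_ifs <;> norm_num
    · -- v = a_{ji}, i < j
      have hvlt' : v.1.2 < v.1.1 :=
        lt_of_le_of_ne (not_lt.mp hvlt) (fun e => hv e.symm)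
      refine ⟨Sum.elim (fun _ => 1)
        (fun t => if t = edgeIdx z (v.2.resolve_left hv) then 0 else 1), fun w => ?_⟩
      by_cases hw : w.1.1 = w.1.2
      · have hwv : w ≠ v := fun he => hv (by rw [← he]; exact hw)
        rw [dotQ_aQ_diag z _ w hw]
        simp only [Sum.elim_inl]
        exact ⟨zero_le_one, iff_of_false one_ne_zero hwv⟩
      · by_cases hwlt : w.1.1 < w.1.2
        · have hwv : w ≠ v := fun he => hvlt (by rw [← he]; exact hwlt)
          rw [dotQ_aQ_lt z _ w hw hwlt]
          simp only [Sum.elim_inl, Sum.elim_inr]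
          refine ⟨?_, iff_of_false ?_ hwv⟩ <;> split_ifs <;> norm_num
        · rw [dotQ_aQ_gt z _ w hw hwlt]
          simp only [Sum.elim_inr]
          constructor
          · split_ifs <;> norm_num
          · by_cases ht : edgeIdx z (w.2.resolve_left hw) = edgeIdx z (v.2.resolve_left hv)
            · have hwv : w = v := by
                rw [edgeIdx_eq_iff] at ht
                rcases Sym2.eq_iff.mp ht with ⟨h1, h2⟩ | ⟨h1, h2⟩
                · exact Subtype.ext (Prod.ext h1 h2)
                · exfalso; rw [h1, h2] at hwlt; exact hwlt hvlt'
              rw [if_pos ht]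
              exact iff_of_true rfl hwv
            · rw [if_neg ht]
              refine iff_of_false one_ne_zero (fun he => ht ?_)
              subst he; rfl

lemma ray_smul {a : (Fin n ⊕ Fin m) → ℚ} {l : ℚ} (hl : 0 < l) : ray (l • a) = ray a := by
  ext x
  constructor
  · rintro ⟨u, hu, rfl⟩
    exact ⟨u * l, mul_nonneg hu hl.le, by rw [smul_smul]⟩
  · rintro ⟨u, hu, rfl⟩
    exact ⟨u / l, div_nonneg hu hl.le, by rw [smul_smul, div_mul_cancel₀ _ hl.ne']⟩

lemma isExtremeRay_aQ (v : VarSet n G) :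
    IsExtremeRay (posCone n m G z) (ray (aQ n m G z v)) := by
  classical
  obtain ⟨c, hc⟩ := exists_cvec z v
  refine ⟨⟨c, ?_, ?_⟩, aQ n m G z v, aQ_ne_zero z v, rfl⟩
  · rintro x ⟨d, hd, rfl⟩
    rw [dotQ_combo]
    exact Finset.sum_nonneg fun w _ => mul_nonneg (hd w) (hc w).1
  · ext x
    constructor
    · rintro ⟨l, hl, rfl⟩
      refine ⟨smul_aQ_mem z v l hl, ?_⟩
      show dotQ c _ = 0
      rw [dotQ_smul, (hc v).2.mpr rfl, mul_zero]
    · rintro ⟨⟨d, hd, rfl⟩, hx⟩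
      have hx' : ∑ w, d w * dotQ c (aQ n m G z w) = 0 := by
        rw [← dotQ_combo]; exact hx
      have hall : ∀ w ∈ Finset.univ, d w * dotQ c (aQ n m G z w) = 0 :=
        (Finset.sum_eq_zero_iff_of_nonneg
          (fun w _ => mul_nonneg (hd w) (hc w).1)).mp hx'
      have hzero : ∀ w : VarSet n G, w ≠ v → d w = 0 := by
        intro w hwv
        have := hall w (Finset.mem_univ w)
        rcases mul_eq_zero.mp this with h | h
        · exact h
        · exact absurd ((hc w).2.mp h) hwv
      refine ⟨d v, hd v, ?_⟩
      rw [Finset.sum_eq_single v]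
      · intro w _ hwv; rw [hzero w hwv, zero_smul]
      · intro hv; exact absurd (Finset.mem_univ v) hv

lemma extremeRay_eq (F : Set ((Fin n ⊕ Fin m) → ℚ))
    (hF : IsExtremeRay (posCone n m G z) F) :
    ∃ v : VarSet n G, F = ray (aQ n m G z v) := by
  classical
  obtain ⟨⟨c, hc0, hcF⟩, a, ha, rfl⟩ := hF
  have haF : a ∈ ray a := ⟨1, zero_le_one, (one_smul _ _).symm⟩
  rw [hcF] at haF
  obtain ⟨⟨d, hd, had⟩, hca⟩ := haF
  have hca' : ∑ w, d w * dotQ c (aQ n m G z w) = 0 := by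
    rw [← dotQ_combo, ← had]; exact hca
  have hall : ∀ w ∈ Finset.univ, d w * dotQ c (aQ n m G z w) = 0 :=
    (Finset.sum_eq_zero_iff_of_nonneg
      (fun w _ => mul_nonneg (hd w) (hc0 _ (aQ_mem z w)))).mp hca'
  -- find w with d w • aQ w ≠ 0
  have hex : ∃ w : VarSet n G, d w • aQ n m G z w ≠ 0 := by
    by_contra h
    push_neg at h
    apply ha
    rw [had, Finset.sum_congr rfl (fun w _ => h w), Finset.sum_const, smul_zero]
  obtain ⟨w, hw⟩ := hex
  have hdw : 0 < d w := by
    rcases (hd w).lt_or_eq with h | h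
    · exact h
    · exact absurd (by rw [← h, zero_smul]) hw
  -- d w • aQ w ∈ F = ray a
  have hmem : d w • aQ n m G z w ∈ ray a := by
    rw [hcF]
    refine ⟨smul_aQ_mem z w (d w) (hd w), ?_⟩
    show dotQ c _ = 0
    rw [dotQ_smul]
    rcases mul_eq_zero.mp (hall w (Finset.mem_univ w)) with h | h
    · exact absurd h hdw.ne'
    · rw [h, mul_zero]
  obtain ⟨l, hl, hla⟩ := hmem
  have hl0 : 0 < l := by
    rcases hl.lt_or_eq with h | h
    · exact h
    · exact absurd (by rw [hla, ← h, zero_smul]) hw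
  refine ⟨w, ?_⟩
  have : aQ n m G z w = (l / d w) • a := by
    have := congrArg (fun x => (d w)⁻¹ • x) hla
    simpa [smul_smul, inv_mul_cancel₀ hdw.ne', div_eq_inv_mul, mul_comm] using this
  rw [this, ray_smul (div_pos hl0 hdw)]

lemma ray_aQ_inj : Function.Injective (fun v : VarSet n G => ray (aQ n m G z v)) := by
  intro v w h
  dsimp at h
  have hmem : aQ n m G z w ∈ ray (aQ n m G z v) := by
    rw [h]; exact ⟨1, zero_le_one, (one_smul _ _).symm⟩
  obtain ⟨l, _, hla⟩ := hmem
  obtain ⟨c, hc⟩ := exists_cvec z w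
  have h0 : dotQ c (aQ n m G z w) = 0 := (hc w).2.mpr rfl
  rw [hla, dotQ_smul] at h0
  rcases mul_eq_zero.mp h0 with h' | h'
  · exfalso
    apply aQ_ne_zero z w
    rw [hla, h', zero_smul]
  · exact (hc v).2.mp h'

include z in
lemma card_varSet : Fintype.card (VarSet n G) = 2 * m + n := by
  classical
  have hdisj : Disjoint (fun p : Fin n × Fin n => p.1 = p.2)
      (fun p : Fin n × Fin n => G.Adj p.1 p.2) := by
    intro f h1 h2 p hp
    have h1p : p.1 = p.2 := h1 p hp
    have h2p : G.Adj p.1 p.2 := h2 p hp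
    rw [h1p] at h2p
    exact G.loopless.irrefl _ h2p
  have e1 : VarSet n G ≃
      {p : Fin n × Fin n // p.1 = p.2} ⊕ {p : Fin n × Fin n // G.Adj p.1 p.2} :=
    subtypeOrEquiv _ _ hdisj
  have e2 : {p : Fin n × Fin n // p.1 = p.2} ≃ Fin n :=
    { toFun := fun p => p.1.1
      invFun := fun i => ⟨(i, i), rfl⟩
      left_inv := fun p => Subtype.ext (Prod.ext rfl p.2)
      right_inv := fun i => rfl }
  have e3 : G.Dart ≃ {p : Fin n × Fin n // G.Adj p.1 p.2} :=
    { toFun := fun d => ⟨d.toProd, d.adj⟩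
      invFun := fun p => ⟨p.1, p.2⟩
      left_inv := fun d => rfl
      right_inv := fun p => rfl }
  have hm : G.edgeFinset.card = m := by
    rw [SimpleGraph.edgeFinset_card]
    rw [← Fintype.card_fin m]
    exact (Fintype.card_congr z).symm
  have h2 : Fintype.card {p : Fin n × Fin n // G.Adj p.1 p.2} = 2 * m := by
    rw [← Fintype.card_congr e3, G.dart_card_eq_twice_card_edges, hm]
  rw [Fintype.card_congr e1, Fintype.card_sum, Fintype.card_congr e2, h2, Fintype.card_fin]
  omega

end Aux

/-- The cone `σ = pos_ℚ(A_G)` has exactly `2m + n` extreme rays: they are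
precisely the (pairwise distinct) rays spanned by the vectors `a ∈ A_G`. -/
theorem extreme_rays_of_posCone (n m : ℕ) (G : SimpleGraph (Fin n)) [DecidableRel G.Adj]
    (z : Fin m ≃ G.edgeSet) :
    {F | IsExtremeRay (posCone n m G z) F} = Set.range (fun v : VarSet n G => ray (aQ n m G z v))
      ∧ Function.Injective (fun v : VarSet n G => ray (aQ n m G z v))
      ∧ {F | IsExtremeRay (posCone n m G z) F}.ncard = 2 * m + n := by
  have hset : {F | IsExtremeRay (posCone n m G z) F}
      = Set.range (fun v : VarSet n G => ray (aQ n m G z v)) := by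
    ext F
    constructor
    · intro hF
      obtain ⟨v, hv⟩ := extremeRay_eq z F hF
      exact ⟨v, hv.symm⟩
    · rintro ⟨v, rfl⟩
      exact isExtremeRay_aQ z v
  refine ⟨hset, ray_aQ_inj z, ?_⟩
  rw [hset, ← Nat.card_coe_set_eq, Nat.card_range_of_injective (ray_aQ_inj z),
    Nat.card_eq_fintype_card, card_varSet z]
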